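/- If f(d) denotes the maximum cardinality of an almost-equidistant set in ℝ^d and R(a,b) denotes the Ramsey number, then f(d) ≤ R(d+2, 3) − 1. -/

import Mathlib

open Finset RealInnerProductSpace


lemma card_le_of_pairwise_dist_one (d : ℕ) (s : Finset (EuclideanSpace ℝ (Fin d)))
    (h : ∀ x ∈ s, ∀ y ∈ s, x ≠ y → dist x y = 1) : s.card ≤ d + 1 := by
  classical
  rcases s.eq_empty_or_nonempty with rfl | ⟨p0, hp0⟩
  · simp
  set t := s.erase p0 with ht
  have hts : t ⊆ s := s.erase_subset p0
  have key : ∀ x ∈ t, ∀ y ∈ t, (⟪(x : EuclideanSpace ℝ (Fin d)) - p0, y - p0⟫ = if x = y then 1 else 1/2) := by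
    intro x hx y hy
    have hx' : x ≠ p0 := Finset.ne_of_mem_erase hx
    have hy' : y ≠ p0 := Finset.ne_of_mem_erase hy
    have dx : ‖x - p0‖ = 1 := by rw [← dist_eq_norm]; exact h x (hts hx) p0 hp0 hx'
    have dy : ‖y - p0‖ = 1 := by rw [← dist_eq_norm]; exact h y (hts hy) p0 hp0 hy'
    by_cases hxy : x = y
    · subst hxy
      rw [if_pos rfl, real_inner_self_eq_norm_sq, dx]; norm_num
    · have dxy : ‖(x - p0) - (y - p0)‖ = 1 := by
        have e : (x - p0) - (y - p0) = x - y := by abel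
        rw [e, ← dist_eq_norm]; exact h x (hts hx) y (hts hy) hxy
      have hn := norm_sub_sq_real (x - p0) (y - p0)
      rw [dxy, dx, dy] at hn
      rw [if_neg hxy]
      nlinarith [hn]
  have hli : LinearIndependent ℝ (fun x : ↥t => (x : EuclideanSpace ℝ (Fin d)) - p0) := by
    rw [Fintype.linearIndependent_iff]
    intro g hg
    have expand : (0 : ℝ) = ∑ i : ↥t, ∑ j : ↥t, g i * g j *
        (if i = j then 1 else 1/2) := by
      have h0 : (⟪∑ i : ↥t, g i • ((i : EuclideanSpace ℝ (Fin d)) - p0),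
          ∑ j : ↥t, g j • ((j : EuclideanSpace ℝ (Fin d)) - p0)⟫ : ℝ) = 0 := by
        rw [hg]; simp
      rw [sum_inner] at h0
      rw [← h0]
      refine Finset.sum_congr rfl fun i _ => ?_
      rw [inner_sum]
      refine Finset.sum_congr rfl fun j _ => ?_
      rw [real_inner_smul_left, real_inner_smul_right, key i i.2 j j.2]
      have e : ((i : EuclideanSpace ℝ (Fin d)) = (j : EuclideanSpace ℝ (Fin d))) ↔ i = j :=
        Subtype.coe_injective.eq_iff
      simp only [e]
      ring
    have expand2 : (0 : ℝ) = (1/2) * (∑ i : ↥t, g i)^2 + (1/2) * ∑ i : ↥t, (g i)^2 := by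
      have sq : (∑ i : ↥t, g i)^2 = ∑ i : ↥t, ∑ j : ↥t, g i * g j := by
        rw [_root_.sq, Finset.sum_mul_sum]
      rw [expand, sq, Finset.mul_sum, Finset.mul_sum, ← Finset.sum_add_distrib]
      refine Finset.sum_congr rfl fun i _ => ?_
      have e2 : (1/2 : ℝ) * g i ^ 2 = ∑ j : ↥t, if j = i then (1/2) * g i^2 else 0 := by
        rw [Finset.sum_ite_eq' Finset.univ i (fun _ => (1/2) * g i^2)]
        simp
      rw [e2, Finset.mul_sum, ← Finset.sum_add_distrib]
      refine Finset.sum_congr rfl fun j _ => ?_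
      by_cases hij : i = j
      · subst hij; simp; ring
      · rw [if_neg hij, if_neg (Ne.symm hij)]; ring
    have hB : ∑ i : ↥t, (g i)^2 = 0 := by
      nlinarith [sq_nonneg (∑ i : ↥t, g i), Finset.sum_nonneg (fun i (_ : i ∈ Finset.univ) => sq_nonneg (g i))]
    intro i
    have := (Finset.sum_eq_zero_iff_of_nonneg
      (fun i (_ : i ∈ Finset.univ) => sq_nonneg (g i))).1 hB i (Finset.mem_univ i)
    exact pow_eq_zero_iff (n := 2) (by norm_num) |>.1 this
  have hcard := hli.fintype_card_le_finrank
  rw [finrank_euclideanSpace_fin] at hcard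
  rw [Fintype.card_coe] at hcard
  have hpos : 0 < s.card := Finset.card_pos.2 ⟨p0, hp0⟩
  have hst : t.card = s.card - 1 := by rw [ht, Finset.card_erase_of_mem hp0]
  omega


def RProp (a b n : ℕ) : Prop := ∀ (α : Type) (G : SimpleGraph α) (W : Finset α),
  n ≤ W.card → ∃ s : Finset α, s ⊆ W ∧
    ((G.IsClique ↑s ∧ s.card = a) ∨ (Gᶜ.IsClique ↑s ∧ s.card = b))

lemma rprop_zero_left (b : ℕ) : RProp 0 b 0 := by
  intro α G W _
  exact ⟨∅, Finset.empty_subset _, Or.inl ⟨by simp, rfl⟩⟩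

lemma rprop_zero_right (a : ℕ) : RProp a 0 0 := by
  intro α G W _
  exact ⟨∅, Finset.empty_subset _, Or.inr ⟨by simp, rfl⟩⟩

lemma ramsey_exists (a b : ℕ) : ∃ n, RProp a b n := by
  induction a generalizing b with
  | zero => exact ⟨0, rprop_zero_left b⟩
  | succ a iha =>
    induction b with
    | zero => exact ⟨0, rprop_zero_right (a + 1)⟩
    | succ b ihb =>
      obtain ⟨n1, h1⟩ := iha (b + 1)
      obtain ⟨n2, h2⟩ := ihb
      refine ⟨n1 + n2 + 1, ?_⟩
      intro α G W hW
      classical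
      have hne : W.Nonempty := Finset.card_pos.1 (by omega)
      obtain ⟨v, hv⟩ := hne
      set N := W.filter (fun x => G.Adj v x) with hN
      set M := W.filter (fun x => x ≠ v ∧ ¬ G.Adj v x) with hM
      have hNW : N ⊆ W := Finset.filter_subset _ _
      have hMW : M ⊆ W := Finset.filter_subset _ _
      have hunion : N ∪ M = W.erase v := by
        ext x
        simp only [hN, hM, Finset.mem_union, Finset.mem_filter, Finset.mem_erase]
        constructor
        · rintro (⟨hw, hadj⟩ | ⟨hw, hne, _⟩)
          · exact ⟨(G.ne_of_adj hadj).symm, hw⟩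
          · exact ⟨hne, hw⟩
        · rintro ⟨hne, hw⟩
          by_cases hadj : G.Adj v x
          · exact Or.inl ⟨hw, hadj⟩
          · exact Or.inr ⟨hw, hne, hadj⟩
      have hdisj : Disjoint N M := by
        rw [Finset.disjoint_left]
        intro x hx hx'
        rw [hN, Finset.mem_filter] at hx
        rw [hM, Finset.mem_filter] at hx'
        exact hx'.2.2 hx.2
      have hcards : N.card + M.card = W.card - 1 := by
        rw [← Finset.card_union_of_disjoint hdisj, hunion, Finset.card_erase_of_mem hv]
      have hcase : n1 ≤ N.card ∨ n2 ≤ M.card := by omega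
      rcases hcase with hc | hc
      · obtain ⟨s, hsN, hs⟩ := h1 α G N hc
        rcases hs with ⟨hcl, hcard⟩ | ⟨hcl, hcard⟩
        · refine ⟨insert v s, ?_, Or.inl ⟨?_, ?_⟩⟩
          · exact Finset.insert_subset hv (hsN.trans hNW)
          · rw [Finset.coe_insert]
            refine hcl.insert fun x hx _ => ?_
            have := hsN hx
            rw [hN, Finset.mem_filter] at this
            exact this.2
          · have hvs : v ∉ s := by
              intro hvs
              have := hsN hvs
              rw [hN, Finset.mem_filter] at this
              exact G.loopless.irrefl v this.2
            rw [Finset.card_insert_of_notMem hvs, hcard]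
        · exact ⟨s, hsN.trans hNW, Or.inr ⟨hcl, hcard⟩⟩
      · obtain ⟨s, hsM, hs⟩ := h2 α G M hc
        rcases hs with ⟨hcl, hcard⟩ | ⟨hcl, hcard⟩
        · exact ⟨s, hsM.trans hMW, Or.inl ⟨hcl, hcard⟩⟩
        · refine ⟨insert v s, ?_, Or.inr ⟨?_, ?_⟩⟩
          · exact Finset.insert_subset hv (hsM.trans hMW)
          · rw [Finset.coe_insert]
            refine hcl.insert fun x hx _ => ?_
            have := hsM hx
            rw [hM, Finset.mem_filter] at this
            rw [SimpleGraph.compl_adj]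
            exact ⟨(this.2.1).symm, this.2.2⟩
          · have hvs : v ∉ s := by
              intro hvs
              have := hsM hvs
              rw [hM, Finset.mem_filter] at this
              exact this.2.1 rfl
            rw [Finset.card_insert_of_notMem hvs, hcard]

/-- The Ramsey number `R a b`: the least `n` such that every blue/red colouring of the
edges of the complete graph on `n` vertices (given by a graph `G` of blue edges, with
non-edges red) contains a blue clique of size `a` or a red clique of size `b`. -/
noncomputable def ramseyNumber (a b : ℕ) : ℕ :=
  sInf {n : ℕ | ∀ G : SimpleGraph (Fin n), ∃ s : Finset (Fin n),
    (G.IsClique ↑s ∧ s.card = a) ∨ (Gᶜ.IsClique ↑s ∧ s.card = b)}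

theorem almost_equidistant_le_ramsey (d : ℕ) (V : Finset (EuclideanSpace ℝ (Fin d)))
    (hAE : ∀ x ∈ V, ∀ y ∈ V, ∀ z ∈ V, x ≠ y → y ≠ z → x ≠ z →
      dist x y = 1 ∨ dist y z = 1 ∨ dist x z = 1) :
    V.card ≤ ramseyNumber (d + 2) 3 - 1 := by
  classical
  set S := {n : ℕ | ∀ G : SimpleGraph (Fin n), ∃ s : Finset (Fin n),
    (G.IsClique ↑s ∧ s.card = d + 2) ∨ (Gᶜ.IsClique ↑s ∧ s.card = 3)} with hS
  obtain ⟨n0, hn0⟩ := ramsey_exists (d + 2) 3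
  have hmem : n0 ∈ S := by
    intro G
    obtain ⟨s, _, hs⟩ := hn0 (Fin n0) G Finset.univ (by simp)
    exact ⟨s, hs⟩
  have hlow : ∀ m ∈ S, V.card + 1 ≤ m := by
    intro m hm
    by_contra hlt
    push_neg at hlt
    have hml : m ≤ V.card := by omega
    set f : Fin m → ↥V := fun i => V.equivFin.symm (Fin.castLE hml i) with hf
    have hfinj : Function.Injective f :=
      V.equivFin.symm.injective.comp (Fin.castLE_injective hml)
    set G : SimpleGraph (Fin m) :=
      SimpleGraph.fromRel (fun i j => dist (f i : EuclideanSpace ℝ (Fin d)) (f j) = 1) with hG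
    obtain ⟨s, hs⟩ := hm G
    rcases hs with ⟨hcl, hcard⟩ | ⟨hcl, hcard⟩
    · set T : Finset (EuclideanSpace ℝ (Fin d)) :=
        s.image (fun i => (f i : EuclideanSpace ℝ (Fin d))) with hT
      have hinj2 : Function.Injective (fun i => (f i : EuclideanSpace ℝ (Fin d))) :=
        Subtype.coe_injective.comp hfinj
      have hTcard : T.card = d + 2 := by
        rw [hT, Finset.card_image_of_injective _ hinj2, hcard]
      have hTd : T.card ≤ d + 1 := by
        refine card_le_of_pairwise_dist_one d T ?_
        intro x hx y hy hxy
        rw [hT, Finset.mem_image] at hx hy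
        obtain ⟨i, hi, rfl⟩ := hx
        obtain ⟨j, hj, rfl⟩ := hy
        have hij : i ≠ j := fun e => hxy (by rw [e])
        have hadj := hcl (Finset.mem_coe.2 hi) (Finset.mem_coe.2 hj) hij
        rw [hG, SimpleGraph.fromRel_adj] at hadj
        rcases hadj.2 with h1 | h1
        · exact h1
        · rw [dist_comm]; exact h1
      omega
    · obtain ⟨x, y, z, hxy, hxz, hyz, rfl⟩ := Finset.card_eq_three.1 hcard
      have hxyA := hcl (by simp) (by simp : (y : Fin m) ∈ _) hxy
      have hyzA := hcl (by simp : (y : Fin m) ∈ _) (by simp : (z : Fin m) ∈ _) hyz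
      have hxzA := hcl (by simp) (by simp : (z : Fin m) ∈ _) hxz
      have hda : ∀ {i j : Fin m}, Gᶜ.Adj i j → dist (f i : EuclideanSpace ℝ (Fin d)) (f j) ≠ 1 := by
        intro i j hadj
        rw [SimpleGraph.compl_adj, hG, SimpleGraph.fromRel_adj] at hadj
        intro hd
        exact hadj.2 ⟨hadj.1, Or.inl hd⟩
      have hfx : (f x : EuclideanSpace ℝ (Fin d)) ∈ V := (f x).2
      have hfy : (f y : EuclideanSpace ℝ (Fin d)) ∈ V := (f y).2
      have hfz : (f z : EuclideanSpace ℝ (Fin d)) ∈ V := (f z).2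
      have hne : ∀ {i j : Fin m}, i ≠ j →
          (f i : EuclideanSpace ℝ (Fin d)) ≠ (f j : EuclideanSpace ℝ (Fin d)) :=
        fun hij e => hij (hfinj (Subtype.coe_injective e))
      rcases hAE _ hfx _ hfy _ hfz (hne hxy) (hne hyz) (hne hxz) with h1 | h1 | h1
      · exact hda hxyA h1
      · exact hda hyzA h1
      · exact hda hxzA h1
  have hle : V.card + 1 ≤ sInf S := le_csInf ⟨n0, hmem⟩ hlow
  have : ramseyNumber (d + 2) 3 = sInf S := rfl
  omega
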